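/- Under the same hypotheses (ρ ≥ 0 in L¹(ℝ²), mass M, supp ρ ⊂ B(0,r₀), zero center of mass, u = K∗ρ with K(x) = -(1/2π)log|x|), there exists C₂ > 0 such that |∇(u(x) - M·K(x))| ≤ C₂ r₀² |x|^{-3} for all |x| ≥ 2r₀. -/

import Mathlib

open MeasureTheory Real RealInnerProductSpace

abbrev E2 : Type := EuclideanSpace ℝ (Fin 2)

noncomputable def WSL : E2 →L[ℝ] E2 →L[ℝ] ℝ := innerSL ℝ

noncomputable def Fk (z : E2) : E2 →L[ℝ] ℝ := (-(1 / (2 * π)) / ‖z‖ ^ 2) • (WSL z)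

noncomputable def Ak (x : E2) : E2 →L[ℝ] E2 →L[ℝ] ℝ :=
  (-(1 / (2 * π)) / ‖x‖ ^ 2) • WSL +
  (2 * (1 / (2 * π)) / ‖x‖ ^ 4) • ((WSL x).smulRight (WSL x))

lemma WSL_apply (x w : E2) : WSL x w = ⟪x, w⟫ := rfl

lemma hasFDerivAt_phi {z : E2} (hz : z ≠ 0) :
    HasFDerivAt (fun w : E2 => -(1 / (2 * π)) * Real.log ‖w‖) (Fk z) z := by
  have hz' : ‖z‖ ≠ 0 := norm_ne_zero_iff.2 hz
  have hn : (0:ℝ) < ‖z‖ ^ 2 := by positivity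
  have h1 : HasFDerivAt (fun w : E2 => ‖w‖ ^ 2) (2 • (innerSL ℝ z)) z :=
    (hasStrictFDerivAt_norm_sq z).hasFDerivAt
  have hlog : HasDerivAt Real.log (‖z‖ ^ 2)⁻¹ (‖z‖ ^ 2) := Real.hasDerivAt_log hn.ne'
  have h2 := (hlog.comp_hasFDerivAt z h1).const_mul (-(1 / (2 * π)) / 2)
  have heq : (fun y : E2 => -(1 / (2 * π)) / 2 * (Real.log ∘ fun w : E2 => ‖w‖ ^ 2) y)
      = fun w : E2 => -(1 / (2 * π)) * Real.log ‖w‖ := by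
    funext w
    simp only [Function.comp, Real.log_pow]
    push_cast
    ring
  rw [heq] at h2
  refine h2.congr_fderiv ?_
  ext w
  have hW : WSL z w = (innerSL ℝ) z w := rfl
  simp only [Fk, ContinuousLinearMap.coe_smul', Pi.smul_apply, smul_eq_mul,
    ContinuousLinearMap.smul_apply, nsmul_eq_mul, hW]
  push_cast
  field_simp

lemma remainder_eq (x y : E2) (hx : x ≠ 0) (hxy : x - y ≠ 0) :
    Fk (x - y) - Fk x + Ak x y = WSL
      ((-(1 / (2 * π)) / (‖x‖ ^ 4 * ‖x - y‖ ^ 2)) •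
        ((2 * ⟪x, y⟫ * (2 * ⟪x, y⟫ - ‖y‖ ^ 2) - ‖x‖ ^ 2 * ‖y‖ ^ 2) • x
          - (‖x‖ ^ 2 * (2 * ⟪x, y⟫ - ‖y‖ ^ 2)) • y)) := by
  have hx' : (0:ℝ) < ‖x‖ := norm_pos_iff.2 hx
  have hxy' : (0:ℝ) < ‖x - y‖ := norm_pos_iff.2 hxy
  have hA : (‖x‖ : ℝ) ^ 2 ≠ 0 := by positivity
  have hB : (‖x - y‖ : ℝ) ^ 2 ≠ 0 := by positivity
  have hBeq : ‖x - y‖ ^ 2 = ‖x‖ ^ 2 - 2 * ⟪x, y⟫ + ‖y‖ ^ 2 := norm_sub_sq_real x y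
  ext w
  simp only [Fk, Ak, WSL_apply, ContinuousLinearMap.add_apply, ContinuousLinearMap.sub_apply,
    ContinuousLinearMap.smul_apply, ContinuousLinearMap.smulRight_apply,
    WSL_apply, smul_eq_mul, inner_sub_left, inner_smul_left, inner_sub_right,
    real_inner_smul_left, map_sub, conj_trivial]
  have hip : ⟪y, w⟫ = ⟪x, w⟫ - ⟪x - y, w⟫ := by rw [inner_sub_left]; ring
  rw [hip]
  rw [hBeq] at hB ⊢
  set a := ⟪x, w⟫ with ha
  set b := ⟪x - y, w⟫ with hb
  set p := ⟪x, y⟫ with hp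
  set nx := ‖x‖ with hnx
  set ny := ‖y‖ with hny
  clear_value a b p nx ny
  field_simp
  ring

lemma remainder_bound (x y : E2) (hx : x ≠ 0) (hy : ‖y‖ ≤ ‖x‖ / 2) :
    ‖Fk (x - y) - Fk x + Ak x y‖ ≤ 40 * (1 / (2 * π)) * ‖y‖ ^ 2 / ‖x‖ ^ 3 := by
  have hx' : (0:ℝ) < ‖x‖ := norm_pos_iff.2 hx
  have hxy2 : ‖x‖ / 2 ≤ ‖x - y‖ := by
    have := norm_sub_norm_le x y
    linarith
  have hxy' : (0:ℝ) < ‖x - y‖ := by linarith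
  have hxy0 : x - y ≠ 0 := by
    intro h; rw [h] at hxy'; simp at hxy'
  have hc : (0:ℝ) < 1 / (2 * π) := by positivity
  rw [remainder_eq x y hx hxy0]
  have hWn : ∀ v : E2, ‖WSL v‖ = ‖v‖ := fun v => innerSL_apply_norm (𝕜 := ℝ) v
  rw [hWn, norm_smul]
  set p := ⟪x, y⟫ with hp
  set nx := ‖x‖ with hnx
  set ny := ‖y‖ with hny
  have hny0 : (0:ℝ) ≤ ny := norm_nonneg _
  have hpb : |p| ≤ nx * ny := abs_real_inner_le_norm x y
  have hN : ‖(2 * p * (2 * p - ny ^ 2) - nx ^ 2 * ny ^ 2) • x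
      - (nx ^ 2 * (2 * p - ny ^ 2)) • y‖ ≤ 10 * nx ^ 3 * ny ^ 2 := by
    have h1 := norm_sub_le ((2 * p * (2 * p - ny ^ 2) - nx ^ 2 * ny ^ 2) • x)
      ((nx ^ 2 * (2 * p - ny ^ 2)) • y)
    rw [norm_smul, norm_smul, Real.norm_eq_abs, Real.norm_eq_abs] at h1
    have hs : |2 * p - ny ^ 2| ≤ 3 * nx * ny := by
      rw [abs_sub_le_iff]
      constructor <;> nlinarith [abs_le.1 hpb, sq_abs p]
    have h2 : |2 * p * (2 * p - ny ^ 2) - nx ^ 2 * ny ^ 2| ≤ 7 * nx ^ 2 * ny ^ 2 := by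
      refine (abs_sub _ _).trans ?_
      have : |2 * p * (2 * p - ny ^ 2)| ≤ 6 * nx ^ 2 * ny ^ 2 := by
        rw [abs_mul, abs_mul]
        have : |(2:ℝ)| = 2 := by norm_num
        rw [this]
        nlinarith [abs_nonneg p, abs_nonneg (2 * p - ny ^ 2)]
      have h3 : |nx ^ 2 * ny ^ 2| = nx ^ 2 * ny ^ 2 := abs_of_nonneg (by positivity)
      linarith
    have h4 : |nx ^ 2 * (2 * p - ny ^ 2)| ≤ 3 * nx ^ 3 * ny := by
      rw [abs_mul, abs_of_nonneg (by positivity : (0:ℝ) ≤ nx ^ 2)]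
      nlinarith
    nlinarith [norm_nonneg x, norm_nonneg y]
  have hcoef : ‖(-(1 / (2 * π)) / (nx ^ 4 * ‖x - y‖ ^ 2))‖ ≤ 4 * (1 / (2 * π)) / nx ^ 6 := by
    rw [Real.norm_eq_abs, abs_div, abs_neg, abs_of_pos hc,
      abs_of_pos (by positivity : (0:ℝ) < nx ^ 4 * ‖x - y‖ ^ 2)]
    rw [div_le_div_iff₀ (by positivity) (by positivity)]
    have hB : nx ^ 2 / 4 ≤ ‖x - y‖ ^ 2 := by nlinarith
    nlinarith [mul_le_mul_of_nonneg_left hB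
      (show (0:ℝ) ≤ 4 * (1 / (2 * π)) * nx ^ 4 by positivity)]
  calc ‖(-(1 / (2 * π)) / (nx ^ 4 * ‖x - y‖ ^ 2))‖ *
        ‖(2 * p * (2 * p - ny ^ 2) - nx ^ 2 * ny ^ 2) • x - (nx ^ 2 * (2 * p - ny ^ 2)) • y‖
      ≤ (4 * (1 / (2 * π)) / nx ^ 6) * (10 * nx ^ 3 * ny ^ 2) := by
        apply mul_le_mul hcoef hN (norm_nonneg _) (by positivity)
    _ = 40 * (1 / (2 * π)) * ny ^ 2 / nx ^ 3 := by
        field_simp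
        ring

lemma aesm_Fk (x : E2) :
    AEStronglyMeasurable (fun y : E2 => Fk (x - y)) (volume : Measure E2) := by
  have hs : MeasurableSet ({x}ᶜ : Set E2) := (measurableSet_singleton x).compl
  have hcont : ContinuousOn (fun y : E2 => Fk (x - y)) ({x}ᶜ : Set E2) := by
    intro y hy
    have hxy : x - y ≠ 0 := sub_ne_zero.2 (fun h => hy (by simp [h.symm]))
    have h0 : ‖x - y‖ ^ 2 ≠ 0 := by
      have : (0:ℝ) < ‖x - y‖ := norm_pos_iff.2 hxy
      positivity
    apply ContinuousAt.continuousWithinAt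
    have hsub : ContinuousAt (fun y : E2 => x - y) y := (continuous_const.sub continuous_id).continuousAt
    have h1 : ContinuousAt (fun z : E2 => (-(1 / (2 * π)) / ‖z‖ ^ 2) • WSL z) (x - y) := by
      apply ContinuousAt.fun_smul
      · exact continuousAt_const.div ((continuous_norm.pow 2).continuousAt) h0
      · exact WSL.continuous.continuousAt
    exact h1.comp hsub
  have h := hcont.aestronglyMeasurable (μ := (volume : Measure E2)) hs
  have hae : ∀ᵐ y ∂(volume : Measure E2), y ∈ ({x}ᶜ : Set E2) := by
    rw [ae_iff]
    have : (volume : Measure E2) {x} = 0 := measure_singleton x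
    simpa using this
  rwa [Measure.restrict_eq_self_of_ae_mem hae] at h

lemma abs_log_sub_log_le' {m a b : ℝ} (hm : 0 < m) (ha : m ≤ a) (hb : m ≤ b) :
    |Real.log a - Real.log b| ≤ |a - b| / m := by
  wlog h : b ≤ a generalizing a b
  · rw [abs_sub_comm, abs_sub_comm a b]; exact this hb ha (le_of_not_ge h)
  have ha0 : 0 < a := lt_of_lt_of_le hm ha
  have hb0 : 0 < b := lt_of_lt_of_le hm hb
  have hlog : Real.log b ≤ Real.log a := Real.log_le_log hb0 h
  rw [abs_of_nonneg (sub_nonneg.2 hlog), abs_of_nonneg (by linarith : (0:ℝ) ≤ a - b),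
    ← Real.log_div ha0.ne' hb0.ne']
  have h1 : Real.log (a / b) ≤ a / b - 1 := Real.log_le_sub_one_of_pos (div_pos ha0 hb0)
  have h2 : a / b - 1 = (a - b) / b := by field_simp
  have h3 : (a - b) / b ≤ (a - b) / m :=
    div_le_div_of_nonneg_left (by linarith) hm hb
  linarith

lemma aesm_log (x : E2) :
    AEStronglyMeasurable (fun y : E2 => Real.log ‖x - y‖) (volume : Measure E2) := by
  have hs : MeasurableSet ({x}ᶜ : Set E2) := (measurableSet_singleton x).compl
  have hcont : ContinuousOn (fun y : E2 => Real.log ‖x - y‖) ({x}ᶜ : Set E2) := by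
    intro y hy
    have hxy : x - y ≠ 0 := sub_ne_zero.2 (fun h => hy (by simp [h.symm]))
    apply ContinuousAt.continuousWithinAt
    have hsub : ContinuousAt (fun y : E2 => ‖x - y‖) y :=
      ((continuous_const.sub continuous_id).norm).continuousAt
    have h2 : ContinuousAt (Real.log ∘ fun y : E2 => ‖x - y‖) y :=
      ContinuousAt.comp (Real.continuousAt_log (norm_ne_zero_iff.2 hxy)) hsub
    exact h2
  have h := hcont.aestronglyMeasurable (μ := (volume : Measure E2)) hs
  have hae : ∀ᵐ y ∂(volume : Measure E2), y ∈ ({x}ᶜ : Set E2) := by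
    rw [ae_iff]
    have : (volume : Measure E2) {x} = 0 := measure_singleton x
    simpa using this
  rwa [Measure.restrict_eq_self_of_ae_mem hae] at h

set_option maxHeartbeats 2000000 in
theorem potential_gradient_decay (M r₀ : ℝ) (hr₀ : 0 < r₀)
    (ρ : E2 → ℝ) (hnn : ∀ x, 0 ≤ ρ x) (hint : Integrable ρ)
    (hsupp : Function.support ρ ⊆ Metric.ball 0 r₀) (hmass : (∫ x, ρ x) = M)
    (hcom : (∫ x, ρ x • x) = (0 : E2))
    (u : E2 → ℝ)
    (hu : ∀ x, u x = ∫ y, (-(1 / (2 * π)) * Real.log (dist x y)) * ρ y) :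
    ∃ C₂ > 0, ∀ x : E2, 2 * r₀ ≤ ‖x‖ →
      ‖fderiv ℝ (fun z => u z - M * (-(1 / (2 * π)) * Real.log ‖z‖)) x‖ ≤
        C₂ * r₀ ^ 2 / ‖x‖ ^ 3 := by
  have hπ : (0:ℝ) < π := Real.pi_pos
  have hc : (0:ℝ) < 1 / (2 * π) := by positivity
  have hM0 : 0 ≤ M := hmass ▸ integral_nonneg hnn
  refine ⟨40 * (1 / (2 * π)) * M + 1, by positivity, ?_⟩
  intro x hx
  have hxnorm : (0:ℝ) < ‖x‖ := lt_of_lt_of_le (by linarith) hx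
  have hx0 : x ≠ 0 := norm_pos_iff.1 hxnorm
  have hρsupp : ∀ y : E2, ρ y ≠ 0 → ‖y‖ < r₀ := by
    intro y hy
    have := hsupp (Function.mem_support.2 hy)
    simpa [Metric.mem_ball, dist_zero_right] using this
  have hxy_ne : ∀ y : E2, ρ y ≠ 0 → x - y ≠ 0 := by
    intro y hy
    have h1 := hρsupp y hy
    have h2 := norm_sub_norm_le x y
    intro h
    rw [h] at h2
    simp only [norm_zero] at h2
    linarith
  -- differentiation under the integral sign
  have hmain := hasFDerivAt_integral_of_dominated_loc_of_lip
    (μ := (volume : Measure E2)) (𝕜 := ℝ)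
    (F := fun x' (y : E2) => (-(1 / (2 * π)) * Real.log (dist x' y)) * ρ y)
    (F' := fun y => ρ y • Fk (x - y)) (x₀ := x)
    (bound := fun y => (2 * (1 / (2 * π)) / r₀) * |ρ y|)
    (s := Metric.ball x (r₀ / 2)) (Metric.ball_mem_nhds x (by positivity))
    ?_ ?_ ?_ ?_ ?_ ?_
  · obtain ⟨hIF', hderiv⟩ := hmain
    have hu_deriv : HasFDerivAt u (∫ y, ρ y • Fk (x - y)) x := by
      have hfun : u = fun x' => ∫ y, (-(1 / (2 * π)) * Real.log (dist x' y)) * ρ y :=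
        funext hu
      rw [hfun]
      exact hderiv
    have hφ : HasFDerivAt (fun z : E2 => M * (-(1 / (2 * π)) * Real.log ‖z‖))
        (M • Fk x) x := (hasFDerivAt_phi hx0).const_mul M
    have hsum := hu_deriv.fun_sub hφ
    rw [hsum.fderiv]
    -- integrability facts
    have hI3 : Integrable (fun y : E2 => ρ y • y) := by
      refine Integrable.mono' (hint.abs.const_mul r₀)
        (hint.aestronglyMeasurable.smul aestronglyMeasurable_id) ?_
      filter_upwards with y
      rw [norm_smul, Real.norm_eq_abs]
      by_cases hy : ρ y = 0
      · simp [hy]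
      · have := (hρsupp y hy).le
        have h0 : (0:ℝ) ≤ |ρ y| := abs_nonneg _
        calc |ρ y| * ‖y‖ ≤ |ρ y| * r₀ := by gcongr
          _ = r₀ * |ρ y| := mul_comm _ _
    have hI2 : Integrable (fun y : E2 => ρ y • Fk x) := hint.smul_const _
    have hI4 : Integrable (fun y : E2 => ρ y • Ak x y) := by
      have h := (Ak x).integrable_comp hI3
      apply h.congr
      filter_upwards with y
      exact ((Ak x).map_smul _ _)
    -- rewrite the derivative as an integral of remainders
    have key : (∫ y, ρ y • Fk (x - y)) - M • Fk x
        = ∫ y, ρ y • (Fk (x - y) - Fk x + Ak x y) := by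
      have e1 : ∀ y : E2, ρ y • (Fk (x - y) - Fk x + Ak x y)
          = ρ y • Fk (x - y) - ρ y • Fk x + ρ y • Ak x y := by
        intro y; rw [smul_add, smul_sub]
      simp_rw [e1]
      have hsub : Integrable (fun y : E2 => ρ y • Fk (x - y) - ρ y • Fk x) := hIF'.sub hI2
      rw [integral_add hsub hI4, integral_sub hIF' hI2, integral_smul_const, hmass]
      have hz : (∫ y, ρ y • Ak x y) = 0 := by
        have e2 : ∀ y : E2, ρ y • Ak x y = Ak x (ρ y • y) := by
          intro y; exact ((Ak x).map_smul _ _).symm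
        simp_rw [e2]
        rw [ContinuousLinearMap.integral_comp_comm (Ak x) hI3, hcom]
        simp
      rw [hz]
      abel
    rw [key]
    -- bound the integral
    have hb : ‖∫ y, ρ y • (Fk (x - y) - Fk x + Ak x y)‖
        ≤ ∫ y, |ρ y| * (40 * (1 / (2 * π)) * r₀ ^ 2 / ‖x‖ ^ 3) := by
      apply norm_integral_le_of_norm_le (hint.abs.mul_const _)
      filter_upwards with y
      have hns : ‖ρ y • (Fk (x - y) - Fk x + Ak x y)‖
          = |ρ y| * ‖Fk (x - y) - Fk x + Ak x y‖ := by
        rw [norm_smul (α := ℝ) (β := E2 →L[ℝ] ℝ), Real.norm_eq_abs]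
      rw [hns]
      by_cases hy : ρ y = 0
      · simp [hy]
      · have hyr := hρsupp y hy
        have hy2 : ‖y‖ ≤ ‖x‖ / 2 := by linarith
        have h1 := remainder_bound x y hx0 hy2
        have h2 : 40 * (1 / (2 * π)) * ‖y‖ ^ 2 / ‖x‖ ^ 3
            ≤ 40 * (1 / (2 * π)) * r₀ ^ 2 / ‖x‖ ^ 3 := by
          gcongr
        have h0 : (0:ℝ) ≤ |ρ y| := abs_nonneg _
        exact mul_le_mul_of_nonneg_left (h1.trans h2) h0
    have hval : (∫ y, |ρ y| * (40 * (1 / (2 * π)) * r₀ ^ 2 / ‖x‖ ^ 3))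
        = M * (40 * (1 / (2 * π)) * r₀ ^ 2 / ‖x‖ ^ 3) := by
      rw [integral_mul_const]
      congr 1
      rw [← hmass]
      apply integral_congr_ae
      filter_upwards with y
      exact abs_of_nonneg (hnn y)
    rw [hval] at hb
    refine hb.trans ?_
    have hfin : M * (40 * (1 / (2 * π)) * r₀ ^ 2 / ‖x‖ ^ 3)
        = (40 * (1 / (2 * π)) * M) * r₀ ^ 2 / ‖x‖ ^ 3 := by ring
    rw [hfin]
    gcongr
    linarith
  -- hF_meas
  · filter_upwards with x'
    refine (((aesm_log x').const_mul (-(1 / (2 * π)))).mul hint.aestronglyMeasurable).congr ?_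
    filter_upwards with y
    simp only [Pi.mul_apply, dist_eq_norm]
  -- hF_int
  · refine Integrable.mono' (hint.abs.const_mul
      ((1 / (2 * π)) * (|Real.log r₀| + |Real.log (‖x‖ + r₀)|))) ?_ ?_
    · refine (((aesm_log x).const_mul (-(1 / (2 * π)))).mul hint.aestronglyMeasurable).congr ?_
      filter_upwards with y
      simp only [Pi.mul_apply, dist_eq_norm]
    · filter_upwards with y
      by_cases hy : ρ y = 0
      · simp [hy]
      · have hyr := hρsupp y hy
        have hl : r₀ ≤ ‖x - y‖ := by
          have := norm_sub_norm_le x y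
          linarith
        have hr : ‖x - y‖ ≤ ‖x‖ + r₀ := by
          have := norm_sub_le x y
          linarith
        have hlog : |Real.log (dist x y)| ≤ |Real.log r₀| + |Real.log (‖x‖ + r₀)| := by
          rw [dist_eq_norm]
          have hlo : Real.log r₀ ≤ Real.log ‖x - y‖ := Real.log_le_log hr₀ hl
          have hhi : Real.log ‖x - y‖ ≤ Real.log (‖x‖ + r₀) :=
            Real.log_le_log (by linarith) hr
          rw [abs_le]
          constructor
          · have := neg_abs_le (Real.log r₀)
            linarith [le_abs_self (Real.log (‖x‖ + r₀)), abs_nonneg (Real.log (‖x‖ + r₀)),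
              abs_nonneg (Real.log r₀)]
          · linarith [le_abs_self (Real.log (‖x‖ + r₀)), abs_nonneg (Real.log r₀)]
        rw [Real.norm_eq_abs, abs_mul, abs_mul, abs_neg, abs_of_pos hc]
        calc (1 / (2 * π)) * |Real.log (dist x y)| * |ρ y|
            ≤ (1 / (2 * π)) * (|Real.log r₀| + |Real.log (‖x‖ + r₀)|) * |ρ y| := by
              apply mul_le_mul_of_nonneg_right _ (abs_nonneg _)
              apply mul_le_mul_of_nonneg_left hlog hc.le
          _ = (1 / (2 * π)) * (|Real.log r₀| + |Real.log (‖x‖ + r₀)|) * |ρ y| := rfl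
  -- hF'_meas
  · exact hint.aestronglyMeasurable.smul (aesm_Fk x)
  -- h_lip
  · filter_upwards with y
    rw [lipschitzOnWith_iff_dist_le_mul]
    intro x₁ h₁ x₂ h₂
    by_cases hy : ρ y = 0
    · simp only [hy, mul_zero]
      rw [dist_self]
      positivity
    · have hyr := hρsupp y hy
      have hlow : ∀ x' : E2, x' ∈ Metric.ball x (r₀ / 2) → r₀ / 2 ≤ ‖x' - y‖ := by
        intro x' hx'
        rw [Metric.mem_ball, dist_eq_norm] at hx'
        have t1 : ‖x‖ - ‖x' - x‖ - ‖y‖ ≤ ‖x' - y‖ := by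
          have a1 := norm_sub_norm_le (x' - y) (x - y)
          have a2 : ‖x' - y - (x - y)‖ = ‖x' - x‖ := by rw [sub_sub_sub_cancel_right]
          have a3 := norm_sub_norm_le x y
          rw [a2] at a1
          have := abs_le.1 (abs_norm_sub_norm_le (x' - y) (x - y))
          linarith [norm_sub_norm_le x y, (abs_le.1 (abs_norm_sub_norm_le (x' - y) (x - y))).1]
        linarith
      have hm1 := hlow x₁ h₁
      have hm2 := hlow x₂ h₂
      rw [Real.dist_eq, dist_eq_norm x₁ y, dist_eq_norm x₂ y]
      have e1 : -(1 / (2 * π)) * Real.log ‖x₁ - y‖ * ρ y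
          - -(1 / (2 * π)) * Real.log ‖x₂ - y‖ * ρ y
          = -(1 / (2 * π)) * ρ y * (Real.log ‖x₁ - y‖ - Real.log ‖x₂ - y‖) := by ring
      rw [e1, abs_mul, abs_mul, abs_neg, abs_of_pos hc]
      have hlg := abs_log_sub_log_le' (by positivity : (0:ℝ) < r₀ / 2) hm1 hm2
      have hnn2 : |‖x₁ - y‖ - ‖x₂ - y‖| ≤ dist x₁ x₂ := by
        have := abs_norm_sub_norm_le (x₁ - y) (x₂ - y)
        rw [sub_sub_sub_cancel_right] at this
        rw [dist_eq_norm]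
        exact this
      have hcoe : ((Real.nnabs (2 * (1 / (2 * π)) / r₀ * |ρ y|)) : ℝ)
          = 2 * (1 / (2 * π)) / r₀ * |ρ y| := by
        rw [Real.coe_nnabs]
        exact abs_of_nonneg (by positivity)
      rw [hcoe]
      calc (1 / (2 * π)) * |ρ y| * |Real.log ‖x₁ - y‖ - Real.log ‖x₂ - y‖|
          ≤ (1 / (2 * π)) * |ρ y| * (|‖x₁ - y‖ - ‖x₂ - y‖| / (r₀ / 2)) := by
            apply mul_le_mul_of_nonneg_left hlg (by positivity)
        _ ≤ (1 / (2 * π)) * |ρ y| * (dist x₁ x₂ / (r₀ / 2)) := by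
            apply mul_le_mul_of_nonneg_left _ (by positivity)
            gcongr
        _ = 2 * (1 / (2 * π)) / r₀ * |ρ y| * dist x₁ x₂ := by
            field_simp
  -- bound integrable
  · exact hint.abs.const_mul _
  -- h_diff
  · filter_upwards with y
    by_cases hy : ρ y = 0
    · simp only [hy, mul_zero, zero_smul]
      exact hasFDerivAt_const 0 x
    · have hxy0 := hxy_ne y hy
      have h1 := hasFDerivAt_phi hxy0
      have h2 : HasFDerivAt (fun x' : E2 => x' - y) (ContinuousLinearMap.id ℝ E2) x :=
        (hasFDerivAt_id x).sub_const y
      have h3 := (h1.comp x h2).mul_const (ρ y)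
      have e1 : (fun x' : E2 => (-(1 / (2 * π)) * Real.log (dist x' y)) * ρ y)
          = fun x' : E2 => ((fun w : E2 => -(1 / (2 * π)) * Real.log ‖w‖) ∘
              fun x' : E2 => x' - y) x' * ρ y := by
        funext x'
        simp [Function.comp, dist_eq_norm]
      rw [e1]
      refine h3.congr_fderiv ?_
      rw [ContinuousLinearMap.comp_id]
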